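/- Let H be a finite graph with positive edge weights w in which every edge weight is an integer multiple of 1/2, and enumerate the edges as e_1, …, e_m. Define perturbed weights w'(e_i) = w(e_i) + 1/2^{i+1}. Then for every pair of vertices u, v of H there is a unique shortest path between u and v with respect to w', and this path is also a shortest path between u and v with respect to w. -/

import Mathlib

open SimpleGraph

/-- The weighted length of a walk: the sum of the weights of its edges. -/
def walkWeight {V : Type*} {H : SimpleGraph V} (w : Sym2 V → ℝ) {u v : V}
    (p : H.Walk u v) : ℝ :=
  (p.edges.map w).sum


private lemma list_half_sum {V : Type*} (w : Sym2 V → ℝ) :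
    ∀ l : List (Sym2 V), (∀ e ∈ l, ∃ q : ℤ, w e = (q : ℝ) / 2) →
      ∃ k : ℤ, (l.map w).sum = (k : ℝ) / 2 := by
  intro l
  induction l with
  | nil => exact fun _ => ⟨0, by simp⟩
  | cons e l ih =>
    intro h
    obtain ⟨q, hq⟩ := h e List.mem_cons_self
    obtain ⟨k, hk⟩ := ih fun e' he' => h e' (List.mem_cons_of_mem _ he')
    refine ⟨q + k, ?_⟩
    simp only [List.map_cons, List.sum_cons, hq, hk]
    push_cast
    ring

private lemma walk_eq_of_edges_perm {V : Type*} {H : SimpleGraph V} {u v : V}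
    (p : H.Walk u v) : ∀ q : H.Walk u v, p.IsPath → q.IsPath →
      p.edges.Perm q.edges → p = q := by
  induction p with
  | nil =>
    intro q _ _ h
    have h0 : q.edges = [] := by
      exact (List.nil_perm).mp (by simpa only [Walk.edges_nil] using h)
    have hlen : q.length = 0 := by
      rw [← SimpleGraph.Walk.length_edges, h0]; rfl
    exact (SimpleGraph.Walk.nil_iff_eq_nil.mp (SimpleGraph.Walk.length_eq_zero_iff.mp hlen)).symm
  | @cons a b c hadj p' ih =>
    intro q hp hq h
    cases q with
    | nil => simp [Walk.edges_cons] at h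
    | @cons _ y _ hadj2 q' =>
      have hmem : s(a, y) ∈ (Walk.cons hadj p').edges := by
        refine h.mem_iff.mpr ?_
        simp [Walk.edges_cons]
      rw [Walk.edges_cons] at hmem
      rcases List.mem_cons.mp hmem with heq | hmem'
      · have hy : y = b := Sym2.congr_right.mp heq
        subst hy
        have hperm : p'.edges.Perm q'.edges := by
          rw [Walk.edges_cons, Walk.edges_cons] at h
          exact h.cons_inv
        rw [ih q' hp.of_cons hq.of_cons hperm]
      · exfalso
        exact (Walk.cons_isPath_iff hadj p').mp hp |>.2
          (Walk.fst_mem_support_of_mem_edges p' hmem')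

private lemma binSum_inj {N : ℕ} (S T : Finset ℕ)
    (hS : ∀ j ∈ S, j < N) (hT : ∀ j ∈ T, j < N)
    (h : ∑ j ∈ S, ((2 : ℝ)⁻¹) ^ (j + 2) = ∑ j ∈ T, ((2 : ℝ)⁻¹) ^ (j + 2)) :
    S = T := by
  have key : ∀ U : Finset ℕ, (∀ j ∈ U, j < N) →
      (∑ j ∈ U, ((2 : ℝ)⁻¹) ^ (j + 2)) * 2 ^ (N + 2)
        = ((∑ j ∈ U.image (fun j => N - j), 2 ^ j : ℕ) : ℝ) := by
    intro U hU
    rw [Finset.sum_mul]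
    have hinj : ∀ x ∈ U, ∀ y ∈ U, N - x = N - y → x = y := by
      intro x hx y hy hxy
      have := hU x hx; have := hU y hy; omega
    rw [Finset.sum_image hinj]
    push_cast
    refine Finset.sum_congr rfl fun j hj => ?_
    have hjN := hU j hj
    have h2 : ((2 : ℝ)) ^ (N - j) * 2 ^ (j + 2) = 2 ^ (N + 2) := by
      rw [← pow_add]; congr 1; omega
    rw [inv_pow, inv_mul_eq_div, div_eq_iff (by positivity)]
    exact h2.symm
  have h2 : ((∑ j ∈ S.image (fun j => N - j), 2 ^ j : ℕ) : ℝ)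
      = ((∑ j ∈ T.image (fun j => N - j), 2 ^ j : ℕ) : ℝ) := by
    rw [← key S hS, ← key T hT, h]
  have h3 : (∑ j ∈ S.image (fun j => N - j), 2 ^ j : ℕ)
      = (∑ j ∈ T.image (fun j => N - j), 2 ^ j : ℕ) := by exact_mod_cast h2
  have h4 : S.image (fun j => N - j) = T.image (fun j => N - j) :=
    Finset.geomSum_injective le_rfl h3
  ext j
  constructor
  · intro hj
    have : N - j ∈ T.image (fun j => N - j) := h4 ▸ Finset.mem_image_of_mem _ hj
    obtain ⟨j', hj', hjj⟩ := Finset.mem_image.mp this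
    have := hT j' hj'; have := hS j hj
    have : j' = j := by omega
    exact this ▸ hj'
  · intro hj
    have : N - j ∈ S.image (fun j => N - j) := h4 ▸ Finset.mem_image_of_mem _ hj
    obtain ⟨j', hj', hjj⟩ := Finset.mem_image.mp this
    have := hS j' hj'; have := hT j hj
    have : j' = j := by omega
    exact this ▸ hj'

private lemma range_pow_sum_lt (m : ℕ) :
    ∑ j ∈ Finset.range m, ((2 : ℝ)⁻¹) ^ (j + 2) < 2⁻¹ := by
  have key : ∀ n : ℕ, ∑ j ∈ Finset.range n, ((2 : ℝ)⁻¹) ^ (j + 2)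
      = 2⁻¹ - 2⁻¹ ^ (n + 1) := by
    intro n
    induction n with
    | zero => norm_num
    | succ n ih =>
      rw [Finset.sum_range_succ, ih]
      ring
  rw [key]
  have : (0 : ℝ) < 2⁻¹ ^ (m + 1) := by positivity
  linarith


/-- Let `H` be a finite graph with positive edge weights `w`, each an
integer multiple of `1/2`, and enumerate the edges as `e₁, …, e_m`.  Define perturbed
weights `w'(eᵢ) = w(eᵢ) + 1/2^(i+1)`.  Then for every pair of vertices `u, v` of `H`
(joined by a walk) there is a unique shortest path between `u` and `v` with respect to
`w'`, and this path is also a shortest path between `u` and `v` with respect to `w`. -/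
theorem statement_14 {V : Type*} [Fintype V] (H : SimpleGraph V)
    (w w' : Sym2 V → ℝ)
    (hpos : ∀ e ∈ H.edgeSet, 0 < w e)
    (hhalf : ∀ e ∈ H.edgeSet, ∃ q : ℤ, w e = (q : ℝ) / 2)
    (m : ℕ) (enum : H.edgeSet ≃ Fin m)
    -- the edge `e` with `enum e = i - 1` is the `i`-th edge `eᵢ`, so its perturbation
    -- `1/2^(i+1)` is `1/2^((enum e) + 2)`
    (hw' : ∀ e : H.edgeSet, w' (e : Sym2 V) = w (e : Sym2 V) + 1 / 2 ^ ((enum e : ℕ) + 2)) :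
    ∀ u v : V, H.Reachable u v →
      ∃ p : H.Walk u v, p.IsPath ∧
        (∀ q : H.Walk u v, q.IsPath → walkWeight w' p ≤ walkWeight w' q) ∧
        (∀ q : H.Walk u v, q.IsPath →
          walkWeight w' q = walkWeight w' p → q = p) ∧
        (∀ q : H.Walk u v, q.IsPath → walkWeight w p ≤ walkWeight w q) := by
  classical
  intro u v huv
  obtain ⟨idx, idx_lt, idx_inj, idx_spec⟩ :
      ∃ idx : Sym2 V → ℕ, (∀ e ∈ H.edgeSet, idx e < m) ∧
        (∀ e ∈ H.edgeSet, ∀ f ∈ H.edgeSet, idx e = idx f → e = f) ∧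
        (∀ (e : Sym2 V) (he : e ∈ H.edgeSet), idx e = (enum ⟨e, he⟩ : ℕ)) := by
    refine ⟨fun e => if h : e ∈ H.edgeSet then (enum ⟨e, h⟩ : ℕ) else 0, ?_, ?_, ?_⟩
    · intro e he; simp only [dif_pos he]; exact (enum ⟨e, he⟩).isLt
    · intro e he f hf h
      simp only [dif_pos he, dif_pos hf] at h
      exact Subtype.ext_iff.mp (enum.injective (Fin.ext h))
    · intro e he; simp only [dif_pos he]
  have hdecomp : ∀ q : H.Walk u v, q.IsPath →
      walkWeight w' q = walkWeight w q
        + ∑ j ∈ q.edges.toFinset.image idx, (2 : ℝ)⁻¹ ^ (j + 2) := by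
    intro q hq
    have hnd : q.edges.Nodup := hq.isTrail.edges_nodup
    have hsub : ∀ e ∈ q.edges, e ∈ H.edgeSet := fun e he => q.edges_subset_edgeSet he
    have hinj : ∀ x ∈ q.edges.toFinset, ∀ y ∈ q.edges.toFinset, idx x = idx y → x = y := by
      intro x hx y hy hxy
      exact idx_inj x (hsub x (List.mem_toFinset.mp hx)) y
        (hsub y (List.mem_toFinset.mp hy)) hxy
    rw [Finset.sum_image hinj]
    have h1 : walkWeight w' q = ∑ e ∈ q.edges.toFinset, w' e :=
      (List.sum_toFinset _ hnd).symm
    have h2 : walkWeight w q = ∑ e ∈ q.edges.toFinset, w e :=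
      (List.sum_toFinset _ hnd).symm
    rw [h1, h2, ← Finset.sum_add_distrib]
    refine Finset.sum_congr rfl fun e he' => ?_
    have he := hsub e (List.mem_toFinset.mp he')
    rw [idx_spec e he, inv_pow, ← one_div]
    exact hw' ⟨e, he⟩
  have hpert_nonneg : ∀ S : Finset ℕ, (0 : ℝ) ≤ ∑ j ∈ S, (2 : ℝ)⁻¹ ^ (j + 2) :=
    fun S => Finset.sum_nonneg fun j _ => by positivity
  have hpert_lt : ∀ q : H.Walk u v,
      (∑ j ∈ q.edges.toFinset.image idx, (2 : ℝ)⁻¹ ^ (j + 2)) < 2⁻¹ := by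
    intro q
    refine lt_of_le_of_lt (Finset.sum_le_sum_of_subset_of_nonneg ?_ ?_) (range_pow_sum_lt m)
    · intro j hj
      obtain ⟨e, he, rfl⟩ := Finset.mem_image.mp hj
      exact Finset.mem_range.mpr (idx_lt e (q.edges_subset_edgeSet (List.mem_toFinset.mp he)))
    · intro j _ _; positivity
  have hmem_lt : ∀ (q : H.Walk u v), ∀ j ∈ q.edges.toFinset.image idx, j < m := by
    intro q j hj
    obtain ⟨e, he, rfl⟩ := Finset.mem_image.mp hj
    exact idx_lt e (q.edges_subset_edgeSet (List.mem_toFinset.mp he))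
  have hhalfw : ∀ q : H.Walk u v, ∃ k : ℤ, walkWeight w q = (k : ℝ) / 2 :=
    fun q => list_half_sum w q.edges fun e he => hhalf e (q.edges_subset_edgeSet he)
  obtain ⟨p₀⟩ := huv
  have hne : (Finset.univ : Finset (H.Path u v)).Nonempty := ⟨p₀.toPath, Finset.mem_univ _⟩
  obtain ⟨P, -, hPmin⟩ := Finset.exists_min_image (Finset.univ : Finset (H.Path u v))
    (fun P => walkWeight w' P.1) hne
  obtain ⟨kp, hkp⟩ := hhalfw P.1
  have hdp := hdecomp P.1 P.2
  refine ⟨P.1, P.2, fun q hq => hPmin ⟨q, hq⟩ (Finset.mem_univ _), ?_, ?_⟩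
  · -- uniqueness
    intro q hq heq
    have hdq := hdecomp q hq
    obtain ⟨kq, hkq⟩ := hhalfw q
    have b1 := hpert_nonneg (q.edges.toFinset.image idx)
    have b2 := hpert_nonneg ((P.1).edges.toFinset.image idx)
    have b3 := hpert_lt q
    have b4 := hpert_lt P.1
    have hk : kq = kp := by
      have h1 : ((kq - kp : ℤ) : ℝ)
          = 2 * ((∑ j ∈ (P.1).edges.toFinset.image idx, (2 : ℝ)⁻¹ ^ (j + 2))
            - ∑ j ∈ q.edges.toFinset.image idx, (2 : ℝ)⁻¹ ^ (j + 2)) := by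
        push_cast
        rw [hdq, hdp, hkq, hkp] at heq
        linarith
      have i1 : (kq - kp : ℤ) < 1 := by
        have : ((kq - kp : ℤ) : ℝ) < 1 := by rw [h1]; linarith
        exact_mod_cast this
      have i2 : (-1 : ℤ) < kq - kp := by
        have : (-1 : ℝ) < ((kq - kp : ℤ) : ℝ) := by rw [h1]; linarith
        exact_mod_cast this
      omega
    have hε : (∑ j ∈ q.edges.toFinset.image idx, (2 : ℝ)⁻¹ ^ (j + 2))
        = ∑ j ∈ (P.1).edges.toFinset.image idx, (2 : ℝ)⁻¹ ^ (j + 2) := by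
      rw [hdq, hdp, hkq, hkp, hk] at heq
      linarith
    have hS : q.edges.toFinset.image idx = (P.1).edges.toFinset.image idx :=
      binSum_inj _ _ (hmem_lt q) (hmem_lt P.1) hε
    have hT : q.edges.toFinset = (P.1).edges.toFinset := by
      ext e
      constructor
      · intro he
        have heE := q.edges_subset_edgeSet (List.mem_toFinset.mp he)
        have : idx e ∈ (P.1).edges.toFinset.image idx :=
          hS ▸ Finset.mem_image_of_mem idx he
        obtain ⟨e', he', hee⟩ := Finset.mem_image.mp this
        have he'E := (P.1).edges_subset_edgeSet (List.mem_toFinset.mp he')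
        rwa [idx_inj e' he'E e heE hee] at he'
      · intro he
        have heE := (P.1).edges_subset_edgeSet (List.mem_toFinset.mp he)
        have : idx e ∈ q.edges.toFinset.image idx :=
          hS ▸ Finset.mem_image_of_mem idx he
        obtain ⟨e', he', hee⟩ := Finset.mem_image.mp this
        have he'E := q.edges_subset_edgeSet (List.mem_toFinset.mp he')
        rwa [idx_inj e' he'E e heE hee] at he'
    have hperm : q.edges.Perm (P.1).edges := by
      have h5 := List.toFinset_eq_iff_perm_dedup.mp hT
      rwa [List.Nodup.dedup hq.isTrail.edges_nodup,
        List.Nodup.dedup P.2.isTrail.edges_nodup] at h5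
    exact walk_eq_of_edges_perm q P.1 hq P.2 hperm
  · -- w-minimality
    intro q hq
    have hdq := hdecomp q hq
    obtain ⟨kq, hkq⟩ := hhalfw q
    have hle : walkWeight w' P.1 ≤ walkWeight w' q := hPmin ⟨q, hq⟩ (Finset.mem_univ _)
    have b2 := hpert_nonneg ((P.1).edges.toFinset.image idx)
    have b3 := hpert_lt q
    have h1 : ((kp - kq : ℤ) : ℝ) < 1 := by
      push_cast
      rw [hdq, hdp, hkq, hkp] at hle
      linarith
    have h2 : (kp - kq : ℤ) < 1 := by exact_mod_cast h1
    have h3 : (kp : ℝ) ≤ kq := by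
      have : kp ≤ kq := by omega
      exact_mod_cast this
    rw [hkp, hkq]
    linarith
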